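/- Pairwise reduction: with the setup of the previous statement, the K-measure minimax equals the maximum of the two-measure minimaxes, i.e., min_{μ} max_{1≤i≤K} f_i(μ) = max_{1≤i<j≤K} ( min_{μ} max{f_i(μ), f_j(μ)} ). -/
import Mathlib


/-- Pairwise reduction: the `K`-parabola minimax equals the maximum over pairs `i < j` of the
two-parabola minimaxes: `min_μ max_k f_k(μ) = max_{i<j} min_μ max{f_i(μ), f_j(μ)}`. -/
theorem upper_variance_stmt10
    {K : ℕ} (hK : 2 ≤ K) (μ κ : Fin K → ℝ) (hmono : Monotone μ)
    (hκ : ∀ i, μ i ^ 2 ≤ κ i) :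
    (⨅ x : ℝ, ⨆ i, (x ^ 2 - 2 * μ i * x + κ i))
      = (Finset.univ.filter fun p : Fin K × Fin K => p.1 < p.2).sup'
          ⟨(⟨0, by omega⟩, ⟨1, by omega⟩), by
            exact Finset.mem_filter.mpr ⟨Finset.mem_univ _, Fin.mk_lt_mk.mpr (by omega)⟩⟩
          (fun p => ⨅ x : ℝ,
            max (x ^ 2 - 2 * μ p.1 * x + κ p.1) (x ^ 2 - 2 * μ p.2 * x + κ p.2)) := by
  have hKpos : 0 < K := by omega
  haveI : Nonempty (Fin K) := ⟨⟨0, hKpos⟩⟩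
  set f : Fin K → ℝ → ℝ := fun i x => x ^ 2 - 2 * μ i * x + κ i with hfdef
  set g : ℝ → ℝ := fun x => Finset.univ.sup' Finset.univ_nonempty (fun i => f i x) with hgdef
  have hgs : ∀ x : ℝ, (⨆ i, (x ^ 2 - 2 * μ i * x + κ i)) = g x := fun x =>
    (Finset.sup'_univ_eq_ciSup _).symm
  have hfle : ∀ i x, f i x ≤ g x := fun i x => Finset.le_sup' (fun i => f i x) (Finset.mem_univ i)
  have hcont : Continuous g :=
    Continuous.finset_sup'_apply _ (fun i _ => by fun_prop)
  -- vertex minimality and monotonicity facts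
  have hvert : ∀ i x, f i (μ i) ≤ f i x := by
    intro i x; simp only [hfdef]; nlinarith [sq_nonneg (x - μ i)]
  have hdec : ∀ (i) (a b : ℝ), a ≤ b → b ≤ μ i → f i b ≤ f i a := by
    intro i a b hab hb; simp only [hfdef]; nlinarith
  have hinc : ∀ (i) (a b : ℝ), a ≤ b → μ i ≤ a → f i a ≤ f i b := by
    intro i a b hab ha; simp only [hfdef]; nlinarith
  set lo : Fin K := ⟨0, hKpos⟩
  set hi : Fin K := ⟨K - 1, by omega⟩
  have hlohi : μ lo ≤ μ hi := hmono (by simp only [lo, hi, Fin.mk_le_mk]; omega)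
  -- existence of a global minimizer
  obtain ⟨x0, hx0mem, hx0min⟩ := (isCompact_Icc (a := μ lo) (b := μ hi)).exists_isMinOn
    (Set.nonempty_Icc.mpr hlohi) hcont.continuousOn
  have hglobal : ∀ x, g x0 ≤ g x := by
    intro x
    rcases le_total x (μ lo) with hx | hx
    · have : g (μ lo) ≤ g x := by
        apply Finset.sup'_mono_fun
        intro i _
        exact hdec i x (μ lo) hx (hmono (show lo ≤ i by simp only [lo, Fin.le_def]; omega))
      exact le_trans (hx0min (Set.left_mem_Icc.mpr hlohi)) this
    · rcases le_total (μ hi) x with hx' | hx'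
      · have : g (μ hi) ≤ g x := by
          apply Finset.sup'_mono_fun
          intro i _
          refine hinc i (μ hi) x hx' (hmono ?_)
          simp only [hi, Fin.le_def]
          have := i.isLt; omega
        exact le_trans (hx0min (Set.right_mem_Icc.mpr hlohi)) this
      · exact hx0min (Set.mem_Icc.mpr ⟨hx, hx'⟩)
  -- LHS equals g x0
  have hbdd : BddBelow (Set.range fun x : ℝ => ⨆ i, (x ^ 2 - 2 * μ i * x + κ i)) := by
    refine ⟨g x0, ?_⟩
    rintro y ⟨x, rfl⟩
    exact le_of_le_of_eq (hglobal x) (hgs x).symm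
  have hLHS : (⨅ x : ℝ, ⨆ i, (x ^ 2 - 2 * μ i * x + κ i)) = g x0 := by
    refine le_antisymm ?_ ?_
    · refine (ciInf_le hbdd x0).trans_eq (hgs x0)
    · exact le_ciInf fun x => le_of_le_of_eq (hglobal x) (hgs x).symm
  set s : ℝ := g x0 with hsdef
  -- existence of active index with vertex on the right
  have hactive_right : ∃ i, f i x0 = s ∧ x0 ≤ μ i := by
    by_contra hcon
    push_neg at hcon
    have hev : ∀ i : Fin K, ∀ᶠ y in nhdsWithin x0 (Set.Iio x0), f i y < s := by
      intro i
      rcases eq_or_lt_of_le (hfle i x0) with heq | hlt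
      · have hμ : μ i < x0 := hcon i heq
        filter_upwards [Ioo_mem_nhdsLT hμ] with y hy
        have : f i y < f i x0 := by
          simp only [hfdef]; nlinarith [hy.1, hy.2]
        linarith [heq]
      · have : ∀ᶠ y in nhds x0, f i y < s :=
          (by fun_prop : Continuous (f i)).continuousAt.eventually_lt continuousAt_const hlt
        exact this.filter_mono nhdsWithin_le_nhds
    have hall : ∀ᶠ y in nhdsWithin x0 (Set.Iio x0), ∀ i, f i y < s :=
      Filter.eventually_all.mpr hev
    obtain ⟨y, hy⟩ := hall.exists
    have h1 : g y < s := (Finset.sup'_lt_iff _).mpr fun i _ => hy i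
    exact absurd (hglobal y) (by linarith)
  have hactive_left : ∃ j, f j x0 = s ∧ μ j ≤ x0 := by
    by_contra hcon
    push_neg at hcon
    have hev : ∀ i : Fin K, ∀ᶠ y in nhdsWithin x0 (Set.Ioi x0), f i y < s := by
      intro i
      rcases eq_or_lt_of_le (hfle i x0) with heq | hlt
      · have hμ : x0 < μ i := hcon i heq
        filter_upwards [Ioo_mem_nhdsGT hμ] with y hy
        have : f i y < f i x0 := by
          simp only [hfdef]; nlinarith [hy.1, hy.2]
        linarith [heq]
      · have : ∀ᶠ y in nhds x0, f i y < s :=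
          (by fun_prop : Continuous (f i)).continuousAt.eventually_lt continuousAt_const hlt
        exact this.filter_mono nhdsWithin_le_nhds
    have hall : ∀ᶠ y in nhdsWithin x0 (Set.Ioi x0), ∀ i, f i y < s :=
      Filter.eventually_all.mpr hev
    obtain ⟨y, hy⟩ := hall.exists
    have h1 : g y < s := (Finset.sup'_lt_iff _).mpr fun i _ => hy i
    exact absurd (hglobal y) (by linarith)
  obtain ⟨i0, hi0, hi0r⟩ := hactive_right
  obtain ⟨j0, hj0, hj0l⟩ := hactive_left
  -- find a pair (a, b) with a < b such that s ≤ max (f a x) (f b x) for all x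
  have hpair : ∃ a b : Fin K, a < b ∧ ∀ x, s ≤ max (f a x) (f b x) := by
    rcases lt_trichotomy i0 j0 with hlt | heq | hgt
    · refine ⟨i0, j0, hlt, fun x => ?_⟩
      rcases le_total x x0 with hx | hx
      · exact le_max_of_le_left (hi0 ▸ hdec i0 x x0 hx hi0r)
      · exact le_max_of_le_right (hj0 ▸ hinc j0 x0 x hx hj0l)
    · -- i0 = j0 : x0 = μ i0 is the vertex; pick any partner
      have hx0 : x0 = μ i0 := le_antisymm hi0r (heq ▸ hj0l)
      have hbound : ∀ x, s ≤ f i0 x := by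
        intro x
        rw [← hi0, hx0]; exact hvert i0 x
      rcases lt_or_ge (i0 : ℕ) (K - 1) with hc | hc
      · exact ⟨i0, ⟨(i0 : ℕ) + 1, by omega⟩, by simp [Fin.lt_def],
          fun x => le_max_of_le_left (hbound x)⟩
      · have : (0 : ℕ) < (i0 : ℕ) := by omega
        exact ⟨⟨0, hKpos⟩, i0, by simp [Fin.lt_def]; omega,
          fun x => le_max_of_le_right (hbound x)⟩
    · refine ⟨j0, i0, hgt, fun x => ?_⟩
      rcases le_total x x0 with hx | hx
      · exact le_max_of_le_right (hi0 ▸ hdec i0 x x0 hx hi0r)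
      · exact le_max_of_le_left (hj0 ▸ hinc j0 x0 x hx hj0l)
  obtain ⟨a, b, hab, hbound⟩ := hpair
  rw [hLHS]
  refine le_antisymm ?_ ?_
  · -- g x0 ≤ value at pair (a,b) ≤ sup'
    have hmem : (a, b) ∈ Finset.univ.filter fun p : Fin K × Fin K => p.1 < p.2 :=
      Finset.mem_filter.mpr ⟨Finset.mem_univ _, hab⟩
    refine le_trans ?_ (Finset.le_sup' _ hmem)
    exact le_ciInf fun x => hbound x
  · -- each pair value ≤ g x0
    apply Finset.sup'_le
    intro p _
    have hbb : BddBelow (Set.range fun x : ℝ =>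
        max (x ^ 2 - 2 * μ p.1 * x + κ p.1) (x ^ 2 - 2 * μ p.2 * x + κ p.2)) := by
      refine ⟨κ p.1 - μ p.1 ^ 2, ?_⟩
      rintro y ⟨x, rfl⟩
      refine le_max_of_le_left ?_
      nlinarith [sq_nonneg (x - μ p.1)]
    refine (ciInf_le hbb x0).trans ?_
    exact max_le (hfle p.1 x0) (hfle p.2 x0)
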